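/- For every a ∈ [0,1), b := √(1−a²), ε ∈ (0,1), and all (z,w) ∈ ℂ² with |z|² + |w|² < 1, one has |z² + 2bw|² + ε²|a²w − bz²|² < (2 − a²)². -/

import Mathlib

theorem key_real_ineq (a b ε X Y r : ℝ)
    (hb : b^2 = 1 - a^2) (hbnn : 0 ≤ b) (hε : 0 < ε) (hε1 : ε < 1)
    (hY : 0 ≤ Y) (hr : r ≤ X^2*Y) (h : X^2+Y^2 < 1) :
    X^4 + 4*b^2*Y^2 + 4*b*r + ε^2*(a^4*Y^2 + b^2*X^4 - 2*a^2*b*r) < (2-a^2)^2 := by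
  have hY1 : Y^2 < 1 := by nlinarith [sq_nonneg X]
  have hc : (0:ℝ) < 2 - a^2 := by nlinarith [sq_nonneg b]
  have he : ε^2 < 1 := by nlinarith
  have h1 : (0:ℝ) ≤ (1-ε^2)*(b*X^2-a^2*Y)^2 := mul_nonneg (by linarith) (sq_nonneg _)
  have h2 : (0:ℝ) ≤ (2-a^2)*((1-Y^2)*(Y-b)^2) :=
    mul_nonneg hc.le (mul_nonneg (by linarith) (sq_nonneg _))
  have h3 : (0:ℝ) < (1-X^2-Y^2)*((2-a^2)*(2*(1-Y^2)-(1-X^2-Y^2)+2*b*Y)) := by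
    apply mul_pos (by linarith)
    apply mul_pos hc
    nlinarith [mul_nonneg hbnn hY, sq_nonneg X]
  have h4 : (0:ℝ) ≤ 2*b*(2-ε^2*a^2)*(X^2*Y - r) :=
    mul_nonneg (mul_nonneg (by linarith) (by nlinarith [sq_nonneg (ε*a), sq_nonneg b])) (by linarith)
  have E : (2-a^2)^2 - (X^4 + 4*b^2*Y^2 + 4*b*(X^2*Y) + ε^2*(a^4*Y^2+b^2*X^4-2*a^2*b*(X^2*Y)))
      = (1-ε^2)*(b*X^2-a^2*Y)^2 + (2-a^2)*((1-Y^2)*(Y-b)^2)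
        + (1-X^2-Y^2)*((2-a^2)*(2*(1-Y^2)-(1-X^2-Y^2)+2*b*Y)) := by
    linear_combination (-2 - 2*Y^2 - X^4 + a^2 - a^2*Y^2) * hb
  linarith [E, h1, h2, h3, h4]

theorem stmt0 (a ε : ℝ) (ha : a ∈ Set.Ico (0:ℝ) 1) (hε : ε ∈ Set.Ioo (0:ℝ) 1)
    (b : ℝ) (hb : b = Real.sqrt (1 - a^2))
    (z w : ℂ) (hzw : ‖z‖ ^ 2 + ‖w‖ ^ 2 < 1) :
    ‖z^2 + 2*(b:ℂ)*w‖ ^ 2 + ε^2 * ‖(a:ℂ)^2*w - (b:ℂ)*z^2‖ ^ 2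
      < (2 - a^2)^2 := by
  obtain ⟨ha0, ha1⟩ := ha
  obtain ⟨hε0, hε1⟩ := hε
  have ha2 : a^2 ≤ 1 := by nlinarith
  have hb2 : b^2 = 1 - a^2 := by
    rw [hb, Real.sq_sqrt (by linarith)]
  have hbnn : 0 ≤ b := hb ▸ Real.sqrt_nonneg _
  have hz : ‖z‖ ^ 2 = z.re^2 + z.im^2 := by
    rw [Complex.sq_norm, Complex.normSq_apply]; ring
  have hz4 : ‖z‖ ^ 4 = (z.re^2 + z.im^2)^2 := by
    rw [show ‖z‖ ^ 4 = (‖z‖ ^ 2)^2 by ring, hz]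
  have hw : ‖w‖ ^ 2 = w.re^2 + w.im^2 := by
    rw [Complex.sq_norm, Complex.normSq_apply]; ring
  have hr' : (z^2 * (starRingEnd ℂ) w).re = (z.re^2 - z.im^2)*w.re + 2*z.re*z.im*w.im := by
    rw [pow_two]
    simp only [Complex.mul_re, Complex.mul_im, Complex.conj_re, Complex.conj_im]
    ring
  have hr : (z^2 * (starRingEnd ℂ) w).re ≤ ‖z‖ ^2 * ‖w‖ := by
    calc (z^2 * (starRingEnd ℂ) w).re ≤ ‖z^2 * (starRingEnd ℂ) w‖ :=
          Complex.re_le_norm _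
    _ = ‖z‖ ^2 * ‖w‖ := by rw [norm_mul, norm_pow, Complex.norm_conj]
  have hA : ‖z^2 + 2*(b:ℂ)*w‖ ^ 2
      = ‖z‖ ^ 4 + 4*b^2*‖w‖ ^2 + 4*b*((z^2 * (starRingEnd ℂ) w).re) := by
    rw [Complex.sq_norm, Complex.normSq_apply, hz4, hw, hr', pow_two z]
    simp only [Complex.add_re, Complex.add_im, Complex.mul_re, Complex.mul_im,
      Complex.ofReal_re, Complex.ofReal_im, Complex.re_ofNat, Complex.im_ofNat]
    ring
  have hB : ‖(a:ℂ)^2*w - (b:ℂ)*z^2‖ ^ 2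
      = a^4*‖w‖ ^2 + b^2*‖z‖ ^4 - 2*a^2*b*((z^2 * (starRingEnd ℂ) w).re) := by
    rw [Complex.sq_norm, Complex.normSq_apply, hz4, hw, hr', pow_two z, pow_two (a:ℂ)]
    simp only [Complex.sub_re, Complex.sub_im, Complex.mul_re, Complex.mul_im,
      Complex.ofReal_re, Complex.ofReal_im]
    ring
  rw [hA, hB]
  exact key_real_ineq a b ε (‖z‖) (‖w‖) _ hb2 hbnn hε0 hε1
    (norm_nonneg w) hr hzw
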